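/- arXiv:1505.07391 — 3 statements merged into one kernel-verified Lean document; each statement's English description precedes it below -/
import Mathlib

section
/- Let n ≥ 1 be an integer and μ > 0 a real number. Let X₁, …, Xₙ be independent random variables on a probability space, each taking values in ℕ = {0,1,2,…}, such that for every i and every m ∈ ℕ one has P[Xᵢ ≥ m] ≤ (μ/(μ+1))^m (i.e., each Xᵢ is stochastically dominated by a geometric random variable over {0,1,2,…} with expected value μ). Then for all real numbers a ≥ 2 and b ≥ 0, P[X₁ + ⋯ + Xₙ ≥ (μ+1)(a·n + b)] < exp(−(a·n + b)/(2(μ+1))). -/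
open MeasureTheory ProbabilityTheory

set_option maxHeartbeats 1000000

lemma geom_mgf_bound {Ω : Type*} [MeasurableSpace Ω] (P : Measure Ω) [IsProbabilityMeasure P]
    (q t : ℝ) (hq0 : 0 ≤ q) (ht0 : 0 ≤ t) (hr1 : Real.exp t * q < 1)
    (Y : Ω → ℕ) (hY : Measurable Y)
    (htail : ∀ m : ℕ, P {ω | m ≤ Y ω} ≤ ENNReal.ofReal (q ^ m)) :
    Integrable (fun ω => Real.exp (t * (Y ω : ℝ))) P ∧
      mgf (fun ω => (Y ω : ℝ)) P t ≤ 1 + (Real.exp t - 1) * q / (1 - Real.exp t * q) := by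
  set r : ℝ := Real.exp t * q with hr_def
  have hr0 : 0 ≤ r := mul_nonneg (Real.exp_pos t).le hq0
  have h1r : 0 < 1 - r := by linarith
  have he1 : (1 : ℝ) ≤ Real.exp t := Real.one_le_exp ht0
  set g : ℕ → ℝ := fun m => Real.exp (t * ((m : ℝ) + 1)) - Real.exp (t * (m : ℝ)) with hg_def
  have hg0 : ∀ m, 0 ≤ g m := by
    intro m
    have hc : (0 : ℝ) ≤ (m : ℝ) := Nat.cast_nonneg m
    have h : t * (m : ℝ) ≤ t * ((m : ℝ) + 1) := by nlinarith
    have := Real.exp_le_exp.mpr h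
    simp only [hg_def]
    linarith
  have hid : ∀ N : ℕ, Real.exp (t * (N : ℝ)) = 1 + ∑ m ∈ Finset.range N, g m := by
    intro N
    have h := Finset.sum_range_sub (f := fun m : ℕ => Real.exp (t * (m : ℝ))) N
    have h2 : ∀ m : ℕ, (fun m : ℕ => Real.exp (t * (m : ℝ))) (m + 1) -
        (fun m : ℕ => Real.exp (t * (m : ℝ))) m = g m := by
      intro m
      simp only [hg_def]
      norm_num
    rw [Finset.sum_congr rfl (fun m _ => h2 m)] at h
    rw [h]
    simp [Real.exp_zero]
  have hgq : ∀ m : ℕ, g m * q ^ (m + 1) = (Real.exp t - 1) * q * r ^ m := by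
    intro m
    have he : Real.exp (t * (m : ℝ)) = (Real.exp t) ^ m := by
      rw [mul_comm, Real.exp_nat_mul]
    have he2 : Real.exp (t * ((m : ℝ) + 1)) = (Real.exp t) ^ m * Real.exp t := by
      rw [mul_add, Real.exp_add, he, mul_one]
    simp only [hg_def, he, he2, hr_def, mul_pow]
    ring
  have hsummable : Summable (fun m : ℕ => (Real.exp t - 1) * q * r ^ m) :=
    (summable_geometric_of_lt_one hr0 hr1).mul_left _
  have hnn : ∀ m : ℕ, 0 ≤ (Real.exp t - 1) * q * r ^ m := fun m =>
    mul_nonneg (mul_nonneg (by linarith) hq0) (pow_nonneg hr0 m)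
  have hset : ∀ m : ℕ, MeasurableSet {ω | m + 1 ≤ Y ω} :=
    fun m => measurableSet_le measurable_const hY
  have hYr : Measurable fun ω => (Y ω : ℝ) := measurable_from_top.comp hY
  have hmeasR : Measurable fun ω => Real.exp (t * (Y ω : ℝ)) := (hYr.const_mul t).exp
  have hMnn : 0 ≤ (Real.exp t - 1) * q / (1 - r) :=
    div_nonneg (mul_nonneg (by linarith) hq0) h1r.le
  -- the main lintegral bound
  have hlin : ∫⁻ ω, ENNReal.ofReal (Real.exp (t * (Y ω : ℝ))) ∂P ≤
      ENNReal.ofReal (1 + (Real.exp t - 1) * q / (1 - r)) := by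
    have hpt : ∀ ω, ENNReal.ofReal (Real.exp (t * (Y ω : ℝ))) =
        1 + ∑' m : ℕ, Set.indicator {ω' | m + 1 ≤ Y ω'} (fun _ => ENNReal.ofReal (g m)) ω := by
      intro ω
      rw [hid (Y ω), ENNReal.ofReal_add zero_le_one (Finset.sum_nonneg fun m _ => hg0 m),
        ENNReal.ofReal_one, ENNReal.ofReal_sum_of_nonneg (fun m _ => hg0 m)]
      congr 1
      have h0 : ∀ m ∉ Finset.range (Y ω),
          Set.indicator {ω' | m + 1 ≤ Y ω'} (fun _ => ENNReal.ofReal (g m)) ω = 0 := by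
        intro m hm
        rw [Finset.mem_range] at hm
        simp only [Set.indicator_apply, Set.mem_setOf_eq]
        rw [if_neg (by omega)]
      rw [tsum_eq_sum h0]
      refine Finset.sum_congr rfl fun m hm => ?_
      rw [Finset.mem_range] at hm
      simp only [Set.indicator_apply, Set.mem_setOf_eq]
      rw [if_pos (by omega)]
    calc ∫⁻ ω, ENNReal.ofReal (Real.exp (t * (Y ω : ℝ))) ∂P
        = ∫⁻ ω, (1 + ∑' m : ℕ,
            Set.indicator {ω' | m + 1 ≤ Y ω'} (fun _ => ENNReal.ofReal (g m)) ω) ∂P := by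
          simp_rw [hpt]
      _ = 1 + ∑' m : ℕ, ENNReal.ofReal (g m) * P {ω | m + 1 ≤ Y ω} := by
          rw [lintegral_add_left measurable_const, lintegral_one, measure_univ]
          congr 1
          rw [lintegral_tsum (fun m => (measurable_const.indicator (hset m)).aemeasurable)]
          exact tsum_congr fun m => lintegral_indicator_const (hset m) _
      _ ≤ 1 + ∑' m : ℕ, ENNReal.ofReal (g m) * ENNReal.ofReal (q ^ (m + 1)) := by
          gcongr with m
          exact htail (m + 1)
      _ = 1 + ∑' m : ℕ, ENNReal.ofReal ((Real.exp t - 1) * q * r ^ m) := by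
          congr 1
          exact tsum_congr fun m => by rw [← ENNReal.ofReal_mul (hg0 m), hgq m]
      _ = 1 + ENNReal.ofReal ((Real.exp t - 1) * q * (1 - r)⁻¹) := by
          rw [← ENNReal.ofReal_tsum_of_nonneg hnn hsummable, tsum_mul_left,
            tsum_geometric_of_lt_one hr0 hr1]
      _ = ENNReal.ofReal (1 + (Real.exp t - 1) * q / (1 - r)) := by
          rw [ENNReal.ofReal_add zero_le_one (by rw [div_eq_mul_inv] at hMnn; exact hMnn),
            ENNReal.ofReal_one, div_eq_mul_inv]
  have hint : Integrable (fun ω => Real.exp (t * (Y ω : ℝ))) P := by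
    refine ⟨hmeasR.aestronglyMeasurable, ?_⟩
    rw [hasFiniteIntegral_iff_ofReal (Filter.Eventually.of_forall fun ω => (Real.exp_pos _).le)]
    exact lt_of_le_of_lt hlin ENNReal.ofReal_lt_top
  refine ⟨hint, ?_⟩
  have hM0 : 0 ≤ 1 + (Real.exp t - 1) * q / (1 - r) := by linarith
  rw [mgf, integral_eq_lintegral_of_nonneg_ae
    (Filter.Eventually.of_forall fun ω => (Real.exp_pos _).le) hmeasR.aestronglyMeasurable]
  exact ENNReal.toReal_le_of_le_ofReal hM0 hlin

/-- Sum of independent geometrically-dominated random variables: if each `Xᵢ` has tail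
`P[Xᵢ ≥ m] ≤ (μ/(μ+1))^m`, then `P[∑ Xᵢ ≥ (μ+1)(an+b)] < exp(−(an+b)/(2(μ+1)))`
for all `a ≥ 2`, `b ≥ 0`. -/
theorem sum_geometric_tail_bound
    {Ω : Type*} [MeasurableSpace Ω] (P : Measure Ω) [IsProbabilityMeasure P]
    (n : ℕ) (hn : 1 ≤ n) (μ : ℝ) (hμ : 0 < μ)
    (X : Fin n → Ω → ℕ) (hmeas : ∀ i, Measurable (X i))
    (hindep : iIndepFun X P)
    (htail : ∀ i (m : ℕ), P {ω | m ≤ X i ω} ≤ ENNReal.ofReal ((μ / (μ + 1)) ^ m))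
    (a b : ℝ) (ha : 2 ≤ a) (hb : 0 ≤ b) :
    P {ω | (μ + 1) * (a * n + b) ≤ ((∑ i, X i ω : ℕ) : ℝ)} <
      ENNReal.ofReal (Real.exp (-(a * (n : ℝ) + b) / (2 * (μ + 1)))) := by
  have hμ1 : (0 : ℝ) < μ + 1 := by linarith
  set q : ℝ := μ / (μ + 1) with hq_def
  set t : ℝ := 1 / (2 * (μ + 1)) with ht_def
  have hq0 : 0 ≤ q := div_nonneg hμ.le hμ1.le
  have hq1 : q < 1 := (div_lt_one hμ1).mpr (by linarith)
  have ht0 : 0 < t := div_pos one_pos (by linarith)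
  have htlt : t < 1 / 2 := by
    rw [ht_def, div_lt_div_iff₀ (by linarith) (by norm_num)]
    nlinarith
  -- key analytic fact: exp t * (1 - t) < 1
  have hkey : Real.exp t * (1 - t) < 1 := by
    have h := Real.add_one_lt_exp (x := -t) (by linarith)
    have hexp : Real.exp (-t) = (Real.exp t)⁻¹ := Real.exp_neg t
    rw [hexp] at h
    have hepos : (0 : ℝ) < Real.exp t := Real.exp_pos t
    have h2 : (1 - t) < (Real.exp t)⁻¹ := by linarith
    calc Real.exp t * (1 - t) < Real.exp t * (Real.exp t)⁻¹ :=
          mul_lt_mul_of_pos_left h2 hepos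
      _ = 1 := mul_inv_cancel₀ hepos.ne'
  have hq_eq : q = 1 - 2 * t := by
    rw [hq_def, ht_def]
    field_simp
    ring
  -- exp t * q < 1
  have hr1 : Real.exp t * q < 1 := by
    have h1 : Real.exp t * q < Real.exp t * (1 - t) := by
      apply mul_lt_mul_of_pos_left _ (Real.exp_pos t)
      rw [hq_eq]
      linarith [ht0]
    linarith
  set M : ℝ := 1 + (Real.exp t - 1) * q / (1 - Real.exp t * q) with hM_def
  have h1r : 0 < 1 - Real.exp t * q := by linarith
  have he1 : (1 : ℝ) ≤ Real.exp t := Real.one_le_exp ht0.le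
  have hM1 : 1 ≤ M := by
    have h2 : 0 ≤ (Real.exp t - 1) * q / (1 - Real.exp t * q) :=
      div_nonneg (mul_nonneg (by linarith) hq0) h1r.le
    rw [hM_def]
    linarith
  -- M < 2 - 2t
  have hMlt : M < 2 - 2 * t := by
    have hqpos : 0 < q := div_pos hμ hμ1
    have h2 : Real.exp t * (2 - 2 * t) < 2 := by nlinarith [hkey]
    have h3 : Real.exp t - 1 < 1 - Real.exp t * q := by
      rw [hq_eq]; nlinarith
    have h4 : (Real.exp t - 1) * q / (1 - Real.exp t * q) < q := by
      rw [div_lt_iff₀ h1r]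
      nlinarith
    rw [hM_def]
    linarith [h4, hq_eq]
  have h2t : 2 - 2 * t ≤ Real.exp (1 - 2 * t) := by
    have := Real.add_one_le_exp (1 - 2 * t)
    linarith
  -- real-valued versions
  set Y : Fin n → Ω → ℝ := fun i ω => (X i ω : ℝ) with hY_def
  have hYmeas : ∀ i, Measurable (Y i) := fun i => measurable_from_top.comp (hmeas i)
  have hYindep : iIndepFun Y P :=
    hindep.comp (fun _ => (Nat.cast : ℕ → ℝ)) (fun _ => measurable_from_top)
  have hbound := fun i => geom_mgf_bound P q t hq0 ht0.le hr1 (X i) (hmeas i) (htail i)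
  have hintS : Integrable (fun ω => Real.exp (t * (∑ i, Y i) ω)) P :=
    hYindep.integrable_exp_mul_sum hYmeas (fun i _ => (hbound i).1)
  set ε : ℝ := (μ + 1) * (a * n + b) with hε_def
  have hchern := measure_ge_le_exp_mul_mgf (X := ∑ i, Y i) (μ := P) ε ht0.le hintS
  have hmgf : mgf (∑ i, Y i) P t ≤ M ^ n := by
    rw [hYindep.mgf_sum hYmeas]
    calc ∏ i, mgf (Y i) P t ≤ ∏ _i : Fin n, M :=
          Finset.prod_le_prod (fun i _ => mgf_nonneg) (fun i _ => (hbound i).2)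
      _ = M ^ n := by simp [Finset.prod_const]
  have hsetEq : {ω | ε ≤ (∑ i, Y i) ω} = {ω | (μ + 1) * (a * n + b) ≤ ((∑ i, X i ω : ℕ) : ℝ)} := by
    ext ω
    simp only [Set.mem_setOf_eq, hε_def, Finset.sum_apply, hY_def, Nat.cast_sum]
  set s : ℝ := a * (n : ℝ) + b with hs_def
  have hn1 : (1 : ℝ) ≤ (n : ℝ) := by exact_mod_cast hn
  have hs2n : 2 * (n : ℝ) ≤ s := by nlinarith
  have hspos : 0 < s := by nlinarith
  -- numeric endgame: exp (-t * ε) * M ^ n < exp (-s / (2 * (μ + 1)))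
  have hfinal : Real.exp (-t * ε) * M ^ n < Real.exp (-s / (2 * (μ + 1))) := by
    have htε : t * ε = s / 2 := by
      rw [ht_def, hε_def, hs_def]
      field_simp
    have hst : -s / (2 * (μ + 1)) = -(s * t) := by rw [ht_def]; ring
    have hMn : M ^ n < Real.exp (s / 2 - s * t) := by
      have h1 : M ^ n < (2 - 2 * t) ^ n :=
        pow_lt_pow_left₀ hMlt (by linarith) (by omega)
      have h2 : (2 - 2 * t) ^ n ≤ Real.exp (1 - 2 * t) ^ n :=
        pow_le_pow_left₀ (by linarith) h2t n
      have h3 : Real.exp (1 - 2 * t) ^ n = Real.exp ((n : ℝ) * (1 - 2 * t)) := by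
        rw [← Real.exp_nat_mul]
      have h12t : 0 < 1 - 2 * t := by linarith
      have h4 : (n : ℝ) * (1 - 2 * t) ≤ s / 2 - s * t := by nlinarith
      calc M ^ n < (2 - 2 * t) ^ n := h1
        _ ≤ Real.exp (1 - 2 * t) ^ n := h2
        _ = Real.exp ((n : ℝ) * (1 - 2 * t)) := h3
        _ ≤ Real.exp (s / 2 - s * t) := Real.exp_le_exp.mpr h4
    calc Real.exp (-t * ε) * M ^ n < Real.exp (-t * ε) * Real.exp (s / 2 - s * t) :=
          mul_lt_mul_of_pos_left hMn (Real.exp_pos _)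
      _ = Real.exp (-t * ε + (s / 2 - s * t)) := (Real.exp_add _ _).symm
      _ = Real.exp (-s / (2 * (μ + 1))) := by
          rw [hst]
          congr 1
          rw [neg_mul, htε]
          ring
  rw [← hsetEq, ENNReal.lt_ofReal_iff_toReal_lt (measure_ne_top P _)]
  calc (P {ω | ε ≤ (∑ i, Y i) ω}).toReal
      ≤ Real.exp (-t * ε) * mgf (∑ i, Y i) P t := hchern
    _ ≤ Real.exp (-t * ε) * M ^ n :=
        mul_le_mul_of_nonneg_left hmgf (Real.exp_pos _).le
    _ < Real.exp (-s / (2 * (μ + 1))) := hfinal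
    _ = Real.exp (-(a * (n : ℝ) + b) / (2 * (μ + 1))) := by rw [hs_def]
end

section
/- Let β ≥ 2 and n ≥ 1 be integers, and let Y₁, …, Yₙ be independent identically distributed geometric random variables over {0,1,2,…} with parameter (β−1)/β, so that E[Yᵢ] = 1/(β−1). Then for every integer m ≥ 1, P[Y₁ + ⋯ + Yₙ ≥ 4n + m] < (0.883)^m. -/
open MeasureTheory ProbabilityTheory


lemma tsum_pi_fin (f : ℕ → ENNReal) : ∀ n, ∑' (a : Fin n → ℕ), ∏ i, f (a i) = (∑' j, f j) ^ n := by
  intro n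
  induction n with
  | zero =>
    rw [pow_zero]
    rw [tsum_eq_single (fun i => i.elim0)]
    · simp
    · intro b hb; exact absurd (funext fun i => i.elim0) (Ne.symm hb)
  | succ n ih =>
    rw [← (Fin.consEquiv fun _ => ℕ).tsum_eq, ENNReal.tsum_prod']
    have : ∀ (x : ℕ) (b : Fin n → ℕ),
        (∏ i, f (((Fin.consEquiv fun _ => ℕ) (x, b)) i)) = f x * ∏ i, f (b i) := by
      intro x b
      rw [Fin.prod_univ_succ]
      simp [Fin.consEquiv]
    simp_rw [this, ENNReal.tsum_mul_left, ENNReal.tsum_mul_right, ih, pow_succ, mul_comm]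

lemma aux_key_pow (k d : ℕ) : (1:ℝ) ≤ (5/8)^k * (8/5)^(k+d) := by
  have h1 : ((5:ℝ)/8) * (8/5) = 1 := by norm_num
  rw [pow_add, ← mul_assoc, ← mul_pow, h1, one_pow, one_mul]
  exact one_le_pow₀ (by norm_num)

lemma aux_split_pow (n m : ℕ) :
    (5/8:ℝ)^(4*n+m) * (5/2)^n = ((5/8:ℝ)^4 * (5/2))^n * (5/8)^m := by
  rw [pow_add, pow_mul, mul_pow]
  ring


/-- Sum of `n` iid geometric random variables with parameter `(β−1)/β` (so expected value
`1/(β−1)`) exceeds `4n + m` with probability less than `0.883^m`. -/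
theorem hirb_node_count_bound
    {Ω : Type*} [MeasurableSpace Ω] (P : Measure Ω) [IsProbabilityMeasure P]
    (β n : ℕ) (hβ : 2 ≤ β) (hn : 1 ≤ n)
    (Y : Fin n → Ω → ℕ) (hmeas : ∀ i, Measurable (Y i))
    (hindep : iIndepFun Y P)
    (hgeom : ∀ i (j : ℕ),
      P {ω | Y i ω = j} =
        ENNReal.ofReal ((1 - ((β : ℝ) - 1) / β) ^ j * (((β : ℝ) - 1) / β)))
    (m : ℕ) (hm : 1 ≤ m) :
    P {ω | 4 * n + m ≤ ∑ i, Y i ω} < ENNReal.ofReal ((0.883 : ℝ) ^ m) := by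
  have hβR : (2:ℝ) ≤ (β:ℝ) := by exact_mod_cast hβ
  have hβ0 : (0:ℝ) < β := by linarith
  set q : ℝ := 1 - ((β : ℝ) - 1) / β with hq_def
  set pr : ℝ := ((β : ℝ) - 1) / β with hpr_def
  have hq : q = 1 / β := by rw [hq_def, hpr_def]; field_simp; ring
  have hq0 : 0 < q := by rw [hq]; positivity
  have hq2 : q ≤ 1/2 := by
    rw [hq, div_le_div_iff₀ hβ0 (by norm_num)]; linarith
  have hpr0 : 0 ≤ pr := by rw [hpr_def]; apply div_nonneg <;> linarith
  have hpr1 : pr = 1 - q := by rw [hq_def]; ring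
  have h85 : (0:ℝ) ≤ 8/5 * q := by positivity
  set k := 4 * n + m with hk
  set T : (Fin n → ℕ) → Set Ω :=
    fun a => if k ≤ ∑ i, a i then ⋂ i, Y i ⁻¹' {a i} else ∅ with hT
  have hsub : {ω | k ≤ ∑ i, Y i ω} ⊆ ⋃ a, T a := by
    intro ω hω
    have hω' : k ≤ ∑ i, Y i ω := hω
    refine Set.mem_iUnion.2 ⟨fun i => Y i ω, ?_⟩
    rw [hT]
    dsimp only
    rw [if_pos hω']
    exact Set.mem_iInter.2 fun i => Set.mem_preimage.2 (Set.mem_singleton _)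
  have h1 : P {ω | k ≤ ∑ i, Y i ω} ≤ ∑' a, P (T a) :=
    le_trans (measure_mono hsub) (measure_iUnion_le _)
  set h : ℕ → ENNReal := fun j => ENNReal.ofReal ((8/5 * q) ^ j * pr) with hh
  have hterm : ∀ a : Fin n → ℕ,
      P (T a) ≤ ENNReal.ofReal ((5/8:ℝ)^k) * ∏ i, h (a i) := by
    intro a
    rw [hT]
    dsimp only
    by_cases hka : k ≤ ∑ i, a i
    · rw [if_pos hka]
      have hmi : P (⋂ i, Y i ⁻¹' {a i}) = ∏ i, P (Y i ⁻¹' {a i}) :=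
        hindep.meas_iInter (fun i => ⟨{a i}, measurableSet_singleton _, rfl⟩)
      rw [hmi]
      have hpt : ∀ i : Fin n, P (Y i ⁻¹' {a i}) = ENNReal.ofReal (q ^ (a i) * pr) :=
        fun i => hgeom i (a i)
      have key : (1:ℝ) ≤ (5/8)^k * (8/5)^(∑ i, a i) := by
        obtain ⟨d, hd⟩ : ∃ d, ∑ i, a i = k + d := ⟨_, (Nat.add_sub_cancel' hka).symm⟩
        rw [hd]
        exact aux_key_pow k d
      have hreal : (∏ i, q ^ (a i) * pr) ≤ (5/8:ℝ)^k * ∏ i, ((8/5 * q) ^ (a i) * pr) := by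
        have e1 : (∏ i, q ^ (a i) * pr) = q ^ (∑ i, a i) * pr ^ n := by
          rw [Finset.prod_mul_distrib, Finset.prod_pow_eq_pow_sum, Finset.prod_const,
            Finset.card_univ, Fintype.card_fin]
        have e2 : (5/8:ℝ)^k * ∏ i, ((8/5 * q) ^ (a i) * pr)
            = ((5/8:ℝ)^k * (8/5)^(∑ i, a i)) * (q ^ (∑ i, a i) * pr ^ n) := by
          rw [Finset.prod_mul_distrib, Finset.prod_pow_eq_pow_sum, Finset.prod_const,
            Finset.card_univ, Fintype.card_fin, mul_pow]
          ring
        rw [e1, e2]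
        exact le_mul_of_one_le_left (by positivity) key
      calc ∏ i, P (Y i ⁻¹' {a i}) = ENNReal.ofReal (∏ i, q ^ (a i) * pr) := by
            rw [ENNReal.ofReal_prod_of_nonneg
              (fun i _ => mul_nonneg (pow_nonneg hq0.le _) hpr0)]
            exact Finset.prod_congr rfl fun i _ => hpt i
        _ ≤ ENNReal.ofReal ((5/8:ℝ)^k * ∏ i, ((8/5 * q) ^ (a i) * pr)) :=
            ENNReal.ofReal_le_ofReal hreal
        _ = ENNReal.ofReal ((5/8:ℝ)^k) * ∏ i, h (a i) := by
            rw [ENNReal.ofReal_mul (by positivity), ENNReal.ofReal_prod_of_nonneg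
              (fun i _ => mul_nonneg (pow_nonneg h85 _) hpr0)]
    · rw [if_neg hka]; simp
  have h2 : ∑' a, P (T a) ≤ ENNReal.ofReal ((5/8:ℝ)^k) * (∑' j, h j) ^ n := by
    calc ∑' a, P (T a)
        ≤ ∑' (a : Fin n → ℕ), ENNReal.ofReal ((5/8:ℝ)^k) * ∏ i, h (a i) :=
          ENNReal.tsum_le_tsum hterm
      _ = ENNReal.ofReal ((5/8:ℝ)^k) * ∑' (a : Fin n → ℕ), ∏ i, h (a i) :=
          ENNReal.tsum_mul_left
      _ = _ := by rw [tsum_pi_fin]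
  have hs0 : (0:ℝ) < 1 - 8/5 * q := by linarith
  have h3 : (∑' j, h j) ≤ ENNReal.ofReal (5/2 : ℝ) := by
    have e1 : ∀ j : ℕ, h j = (ENNReal.ofReal (8/5 * q)) ^ j * ENNReal.ofReal pr := by
      intro j
      show ENNReal.ofReal ((8/5 * q) ^ j * pr) = _
      rw [ENNReal.ofReal_mul (pow_nonneg h85 j), ENNReal.ofReal_pow h85]
    have e : ∑' j, h j = ENNReal.ofReal ((1 - 8/5*q)⁻¹ * pr) := by
      calc ∑' j, h j = ∑' j : ℕ, (ENNReal.ofReal (8/5 * q)) ^ j * ENNReal.ofReal pr :=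
            tsum_congr e1
        _ = (1 - ENNReal.ofReal (8/5*q))⁻¹ * ENNReal.ofReal pr := by
            rw [ENNReal.tsum_mul_right, ENNReal.tsum_geometric]
        _ = ENNReal.ofReal ((1 - 8/5*q)⁻¹ * pr) := by
            rw [← ENNReal.ofReal_one, ← ENNReal.ofReal_sub _ h85,
              ← ENNReal.ofReal_inv_of_pos hs0,
              ← ENNReal.ofReal_mul (inv_nonneg.2 hs0.le)]
    rw [e]
    apply ENNReal.ofReal_le_ofReal
    have hb : pr ≤ 5/2 * (1 - 8/5*q) := by rw [hpr1]; linarith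
    calc (1 - 8/5*q)⁻¹ * pr ≤ (1 - 8/5*q)⁻¹ * (5/2 * (1 - 8/5*q)) :=
          mul_le_mul_of_nonneg_left hb (inv_nonneg.2 hs0.le)
      _ = 5/2 := by
          rw [mul_comm (5/2:ℝ) _, ← mul_assoc, inv_mul_cancel₀ hs0.ne', one_mul]
  have h4 : P {ω | k ≤ ∑ i, Y i ω} ≤ ENNReal.ofReal ((5/8:ℝ)^k * (5/2)^n) := by
    calc P {ω | k ≤ ∑ i, Y i ω} ≤ ENNReal.ofReal ((5/8:ℝ)^k) * (∑' j, h j) ^ n :=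
          le_trans h1 h2
      _ ≤ ENNReal.ofReal ((5/8:ℝ)^k) * (ENNReal.ofReal (5/2 : ℝ)) ^ n :=
          mul_le_mul_right (pow_le_pow_left₀ zero_le h3 n) _
      _ = ENNReal.ofReal ((5/8:ℝ)^k * (5/2)^n) := by
          rw [ENNReal.ofReal_mul (by positivity : (0:ℝ) ≤ (5/8)^k)]
          congr 1
          rw [ENNReal.ofReal_pow (by norm_num : (0:ℝ) ≤ 5/2)]
  refine lt_of_le_of_lt h4 ?_
  rw [ENNReal.ofReal_lt_ofReal_iff (by positivity)]
  rw [hk, aux_split_pow n m]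
  have f1 : ((5/8:ℝ)^4 * (5/2))^n ≤ 1 := pow_le_one₀ (by norm_num) (by norm_num)
  have f2 : (5/8:ℝ)^m < (0.883:ℝ)^m :=
    pow_lt_pow_left₀ (by norm_num) (by norm_num) (Nat.one_le_iff_ne_zero.mp hm)
  have f3 : (0:ℝ) ≤ (5/8:ℝ)^m := by positivity
  have f4 : (0:ℝ) ≤ ((5/8:ℝ)^4 * (5/2))^n := by positivity
  nlinarith
end

section
/- Let β ≥ 2, H ≥ 1, n ≥ 1, and m ≥ 1 be integers with n ≤ β^H, and let S be a binomial random variable with n trials and success probability p = β^{−H}. Then P[S ≥ m·β] ≤ 2^{1−m·β} ≤ (1/2)^m. -/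
open MeasureTheory ProbabilityTheory

theorem aux_choose_le {n k j : ℕ} : n.choose (k + j) ≤ n.choose k * (n - k).choose j := by
  rcases le_or_gt (k + j) n with h | h
  · have := Nat.choose_mul (n := n) (k := k + j) (s := k) (Nat.le_add_right _ _)
    have h1 : 1 ≤ (k + j).choose k := Nat.choose_pos (Nat.le_add_right _ _)
    calc n.choose (k + j) = n.choose (k + j) * 1 := (mul_one _).symm
      _ ≤ n.choose (k + j) * (k + j).choose k := Nat.mul_le_mul_left _ h1
      _ = n.choose k * (n - k).choose (k + j - k) := this
      _ = n.choose k * (n - k).choose j := by rw [Nat.add_sub_cancel_left]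
  · rw [Nat.choose_eq_zero_of_lt h]; exact Nat.zero_le _

theorem aux_two_pow_le_factorial (k : ℕ) (hk : 1 ≤ k) : 2 ^ (k - 1) ≤ Nat.factorial k := by
  obtain ⟨j, rfl⟩ := Nat.exists_eq_add_of_le hk
  have := Nat.factorial_mul_pow_le_factorial (m := 1) (n := j)
  simpa using this

/-- For a binomial random variable `S` with `n ≤ β^H` trials and success probability
`β^{−H}`, one has `P[S ≥ mβ] ≤ 2^{1−mβ} ≤ (1/2)^m`. -/
theorem hirb_root_size_bound
    {Ω : Type*} [MeasurableSpace Ω] (P : Measure Ω) [IsProbabilityMeasure P]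
    (β H n m : ℕ) (hβ : 2 ≤ β) (hH : 1 ≤ H) (hn : 1 ≤ n) (hm : 1 ≤ m)
    (hnH : n ≤ β ^ H)
    (S : Ω → ℕ) (hmeas : Measurable S)
    (hbin : ∀ j : ℕ, P {ω | S ω = j} =
      ENNReal.ofReal
        ((n.choose j : ℝ) * (((β : ℝ) ^ H)⁻¹) ^ j * (1 - ((β : ℝ) ^ H)⁻¹) ^ (n - j))) :
    P {ω | m * β ≤ S ω} ≤ ENNReal.ofReal ((2 : ℝ) ^ ((1 : ℤ) - (m : ℤ) * (β : ℤ))) ∧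
      (2 : ℝ) ^ ((1 : ℤ) - (m : ℤ) * (β : ℤ)) ≤ (1 / 2 : ℝ) ^ m := by
  set p : ℝ := ((β : ℝ) ^ H)⁻¹ with hpdef
  set k : ℕ := m * β with hkdef
  have hk1 : 1 ≤ k := by
    calc 1 = 1 * 1 := (one_mul 1).symm
    _ ≤ m * β := Nat.mul_le_mul hm (by omega)
  have hβR : (2 : ℝ) ≤ (β : ℝ) := by exact_mod_cast hβ
  have hb1 : (1 : ℝ) ≤ (β : ℝ) ^ H := one_le_pow₀ (by linarith)
  have hbpos : (0 : ℝ) < (β : ℝ) ^ H := lt_of_lt_of_le one_pos hb1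
  have hp0 : 0 ≤ p := by rw [hpdef]; positivity
  have hp1 : p ≤ 1 := by rw [hpdef]; exact inv_le_one_of_one_le₀ hb1
  set f : ℕ → ℝ := fun j => (n.choose j : ℝ) * p ^ j * (1 - p) ^ (n - j) with hfdef
  have hfnn : ∀ j, 0 ≤ f j := by
    intro j
    have h1p : 0 ≤ 1 - p := by linarith
    exact mul_nonneg (mul_nonneg (by positivity) (pow_nonneg hp0 _)) (pow_nonneg h1p _)
  -- cast of exponent
  have hcast : (1 : ℤ) - (m : ℤ) * (β : ℤ) = (1 : ℤ) - (k : ℤ) := by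
    rw [hkdef]; push_cast; ring
  -- key real inequality on choose * p^k
  have hch : (n.choose k : ℝ) * p ^ k ≤ (2 : ℝ) ^ ((1 : ℤ) - (k : ℤ)) := by
    have hfac : (Nat.factorial k : ℝ) * (n.choose k : ℝ) ≤ (n : ℝ) ^ k := by
      have := Nat.descFactorial_le_pow n k
      rw [Nat.descFactorial_eq_factorial_mul_choose] at this
      exact_mod_cast this
    have hnp : (n : ℝ) * p ≤ 1 := by
      rw [hpdef]
      calc (n : ℝ) * ((β : ℝ) ^ H)⁻¹ ≤ (β : ℝ) ^ H * ((β : ℝ) ^ H)⁻¹ := by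
            apply mul_le_mul_of_nonneg_right _ (by positivity)
            exact_mod_cast hnH
        _ = 1 := mul_inv_cancel₀ (ne_of_gt hbpos)
    have hnppow : (n : ℝ) ^ k * p ^ k ≤ 1 := by
      rw [← mul_pow]
      exact pow_le_one₀ (by positivity) hnp
    have hfacpos : (0 : ℝ) < (Nat.factorial k : ℝ) := by exact_mod_cast Nat.factorial_pos k
    have h1 : (n.choose k : ℝ) * p ^ k ≤ 1 / (Nat.factorial k : ℝ) := by
      rw [le_div_iff₀ hfacpos]
      calc (n.choose k : ℝ) * p ^ k * (Nat.factorial k : ℝ)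
          = ((Nat.factorial k : ℝ) * (n.choose k : ℝ)) * p ^ k := by ring
        _ ≤ (n : ℝ) ^ k * p ^ k := mul_le_mul_of_nonneg_right hfac (pow_nonneg hp0 k)
        _ ≤ 1 := hnppow
    have h2 : (1 : ℝ) / (Nat.factorial k : ℝ) ≤ (2 : ℝ) ^ ((1 : ℤ) - (k : ℤ)) := by
      have hpf : (2 : ℝ) ^ (k - 1 : ℕ) ≤ (Nat.factorial k : ℝ) := by
        exact_mod_cast aux_two_pow_le_factorial k hk1
      have hz : (2 : ℝ) ^ ((1 : ℤ) - (k : ℤ)) = ((2 : ℝ) ^ (k - 1 : ℕ))⁻¹ := by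
        rw [← zpow_natCast (2 : ℝ) (k - 1), ← zpow_neg]
        congr 1
        push_cast [Nat.cast_sub hk1]
        ring
      rw [hz, one_div]
      exact inv_anti₀ (by positivity) hpf
    exact h1.trans h2
  -- key bound on the tail sum
  have key : ∑ j ∈ Finset.range (n + 1), f (k + j) ≤ (2 : ℝ) ^ ((1 : ℤ) - (k : ℤ)) := by
    rcases le_or_gt k n with hkn | hkn
    · -- k ≤ n
      have h1p : 0 ≤ 1 - p := by linarith
      have hbd : ∀ j ∈ Finset.range (n + 1),
          f (k + j) ≤ (n.choose k : ℝ) * p ^ k *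
            (((n - k).choose j : ℝ) * p ^ j * (1 - p) ^ (n - k - j)) := by
        intro j _
        have hc : (n.choose (k + j) : ℝ) ≤ (n.choose k : ℝ) * ((n - k).choose j : ℝ) := by
          exact_mod_cast aux_choose_le (n := n) (k := k) (j := j)
        have : f (k + j) = (n.choose (k + j) : ℝ) * (p ^ k * p ^ j) * (1 - p) ^ (n - k - j) := by
          rw [hfdef]
          simp only [pow_add, Nat.sub_add_eq]
        rw [this]
        calc (n.choose (k + j) : ℝ) * (p ^ k * p ^ j) * (1 - p) ^ (n - k - j)
            ≤ (n.choose k : ℝ) * ((n - k).choose j : ℝ) * (p ^ k * p ^ j) * (1 - p) ^ (n - k - j) := by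
              apply mul_le_mul_of_nonneg_right _ (pow_nonneg h1p _)
              exact mul_le_mul_of_nonneg_right hc (by positivity)
          _ = (n.choose k : ℝ) * p ^ k * (((n - k).choose j : ℝ) * p ^ j * (1 - p) ^ (n - k - j)) := by
              ring
      have hsum1 : ∑ j ∈ Finset.range (n + 1),
          (((n - k).choose j : ℝ) * p ^ j * (1 - p) ^ (n - k - j)) = 1 := by
        have hsub : Finset.range (n - k + 1) ⊆ Finset.range (n + 1) :=
          Finset.range_subset_range.2 (by omega)
        rw [← Finset.sum_subset hsub (by
          intro j _ hj
          simp only [Finset.mem_range, not_lt] at hj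
          have : n - k < j := by omega
          simp [Nat.choose_eq_zero_of_lt this])]
        have := add_pow (R := ℝ) p (1 - p) (n - k)
        simp only [add_sub_cancel, one_pow] at this
        calc ∑ x ∈ Finset.range (n - k + 1), ((n - k).choose x : ℝ) * p ^ x * (1 - p) ^ (n - k - x)
            = ∑ x ∈ Finset.range (n - k + 1), p ^ x * (1 - p) ^ (n - k - x) * ((n - k).choose x : ℝ) :=
              Finset.sum_congr rfl fun x _ => by ring
          _ = 1 := this.symm
      calc ∑ j ∈ Finset.range (n + 1), f (k + j)
          ≤ ∑ j ∈ Finset.range (n + 1), (n.choose k : ℝ) * p ^ k *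
              (((n - k).choose j : ℝ) * p ^ j * (1 - p) ^ (n - k - j)) :=
            Finset.sum_le_sum hbd
        _ = (n.choose k : ℝ) * p ^ k := by rw [← Finset.mul_sum, hsum1, mul_one]
        _ ≤ (2 : ℝ) ^ ((1 : ℤ) - (k : ℤ)) := hch
    · -- n < k : every term is zero
      have : ∀ j ∈ Finset.range (n + 1), f (k + j) = 0 := by
        intro j _
        have : n < k + j := by omega
        simp [hfdef, Nat.choose_eq_zero_of_lt this]
      rw [Finset.sum_congr rfl this]
      simp only [Finset.sum_const_zero]
      positivity
  -- measure-theoretic part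
  have hsubset : {ω | k ≤ S ω} ⊆ ⋃ j : ℕ, {ω | S ω = k + j} := by
    intro ω hω
    simp only [Set.mem_setOf_eq] at hω
    exact Set.mem_iUnion.2 ⟨S ω - k, by simp only [Set.mem_setOf_eq]; omega⟩
  have hmeasle : P {ω | k ≤ S ω} ≤ ENNReal.ofReal ((2 : ℝ) ^ ((1 : ℤ) - (k : ℤ))) := by
    calc P {ω | k ≤ S ω} ≤ P (⋃ j : ℕ, {ω | S ω = k + j}) := measure_mono hsubset
      _ ≤ ∑' j : ℕ, P {ω | S ω = k + j} := measure_iUnion_le _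
      _ = ∑' j : ℕ, ENNReal.ofReal (f (k + j)) := by
          refine tsum_congr fun j => ?_
          rw [hbin (k + j)]
      _ = ∑ j ∈ Finset.range (n + 1), ENNReal.ofReal (f (k + j)) := by
          refine tsum_eq_sum ?_
          intro j hj
          simp only [Finset.mem_range, not_lt] at hj
          have : n < k + j := by omega
          simp [hfdef, Nat.choose_eq_zero_of_lt this]
      _ = ENNReal.ofReal (∑ j ∈ Finset.range (n + 1), f (k + j)) :=
          (ENNReal.ofReal_sum_of_nonneg fun j _ => hfnn (k + j)).symm
      _ ≤ ENNReal.ofReal ((2 : ℝ) ^ ((1 : ℤ) - (k : ℤ))) := ENNReal.ofReal_le_ofReal key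
  constructor
  · rw [hcast]
    exact hmeasle
  · have hle : (1 : ℤ) - (m : ℤ) * (β : ℤ) ≤ -(m : ℤ) := by
      have h2m : (2 : ℤ) * (m : ℤ) ≤ (m : ℤ) * (β : ℤ) := by
        have : (2 : ℤ) ≤ (β : ℤ) := by exact_mod_cast hβ
        nlinarith [Int.ofNat_le.2 hm]
      have h1m : (1 : ℤ) ≤ (m : ℤ) := by exact_mod_cast hm
      linarith
    calc (2 : ℝ) ^ ((1 : ℤ) - (m : ℤ) * (β : ℤ)) ≤ (2 : ℝ) ^ (-(m : ℤ)) :=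
          zpow_le_zpow_right₀ one_le_two hle
      _ = (1 / 2 : ℝ) ^ m := by
          rw [zpow_neg, zpow_natCast, one_div, inv_pow]
end
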